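/- Let λ ≥ 0 be an integer and s_λ(n) = s(n mod 2^λ) the truncated binary sum-of-digits function. If u, v, E are nonnegative integers with u ≤ v ≤ u + E, E < 2^λ, and u mod 2^λ < 2^λ − E, then s(v) − s(u) = s_λ(v) − s_λ(u). -/

import Mathlib

/-- The binary sum-of-digits function. -/
def binDigitSum (n : ℕ) : ℕ := (Nat.digits 2 n).sum

/-- The truncated binary sum-of-digits function. -/
def truncDigitSum (lam : ℕ) (n : ℕ) : ℕ := binDigitSum (n % 2 ^ lam)

lemma binDigitSum_split (k n : ℕ) :
    binDigitSum n = binDigitSum (n % 2 ^ k) + binDigitSum (n / 2 ^ k) := by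
  rcases Nat.eq_zero_or_pos (n / 2 ^ k) with h | h
  · have hn : n < 2 ^ k := by
      have h1 := Nat.div_eq_zero_iff.mp h; have h2 := pow_pos (two_pos : 0 < 2) k; omega
    simp [binDigitSum, h, Nat.mod_eq_of_lt hn]
  · have hr : n % 2 ^ k < 2 ^ k := Nat.mod_lt _ (pow_pos two_pos k)
    have hlen : (Nat.digits 2 (n % 2 ^ k)).length ≤ k := by
      rcases Nat.eq_zero_or_pos (n % 2 ^ k) with h0 | h0
      · simp [h0]
      · rw [Nat.digits_len 2 _ one_lt_two h0.ne', Nat.succ_le_iff]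
        exact Nat.log_lt_of_lt_pow h0.ne' hr
    obtain ⟨j, hj⟩ := Nat.le.dest hlen
    have key := Nat.digits_append_zeroes_append_digits (b := 2) (k := j)
      (m := n / 2 ^ k) (n := n % 2 ^ k) one_lt_two h
    rw [hj, Nat.mod_add_div] at key
    calc binDigitSum n
        = (Nat.digits 2 (n % 2 ^ k) ++ List.replicate j 0 ++
            Nat.digits 2 (n / 2 ^ k)).sum := by rw [key]; rfl
      _ = binDigitSum (n % 2 ^ k) + binDigitSum (n / 2 ^ k) := by
          simp [binDigitSum, List.sum_append]

theorem stmt_9 (lam u v E : ℕ) (huv : u ≤ v) (hvE : v ≤ u + E) (hE : E < 2 ^ lam)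
    (hu : u % 2 ^ lam < 2 ^ lam - E) :
    (binDigitSum v : ℤ) - binDigitSum u =
      (truncDigitSum lam v : ℤ) - truncDigitSum lam u := by
  obtain ⟨d, rfl⟩ := Nat.le.dest huv
  have hd : d ≤ E := by omega
  have hsmall : u % 2 ^ lam + d < 2 ^ lam := by omega
  have hdiv : (u + d) / 2 ^ lam = u / 2 ^ lam := by
    conv_lhs => rw [← Nat.mod_add_div u (2 ^ lam)]
    rw [show u % 2 ^ lam + 2 ^ lam * (u / 2 ^ lam) + d
        = u % 2 ^ lam + d + 2 ^ lam * (u / 2 ^ lam) by ring,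
      Nat.add_mul_div_left _ _ (pow_pos two_pos lam),
      Nat.div_eq_of_lt hsmall, Nat.zero_add]
  rw [truncDigitSum, truncDigitSum, binDigitSum_split lam (u + d),
    binDigitSum_split lam u, hdiv]
  push_cast
  ring
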